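/- The function f is six times differentiable on ℝ and for every real x: 0 = 32·(4x − 16x³ + 9x⁵)·f(x) − 4·(27 − 148x² + 598x⁴ − 63x⁶)·f'(x) − 4·(117x − 568x³ + 556x⁵ − 9x⁷)·f''(x) − (478x² − 2919x⁴ + 603x⁶)·f'''(x) − 5·(34x³ − 247x⁵ + 9x⁷)·f⁗(x) − (23x⁴ − 189x⁶)·f⁽⁵⁾(x) − (x⁵ − 9x⁷)·f⁽⁶⁾(x). -/

import Mathlib

open MeasureTheory intervalIntegral

/-! Auxiliary development: write the quadruple integral as `(HH 0 x)^2` where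
`HH k x = ∫ (uv-square) (-(uv))^k exp(-x uv)`, prove differentiation under the
integral sign, a third-order ODE for `HH 0` via an explicit boundary-vanishing
certificate, and deduce the sixth-order ODE for the square. -/

noncomputable def QIM : Measure (ℝ × ℝ) :=
  volume.restrict (Set.Ioc (-1 : ℝ) 1 ×ˢ Set.Ioc (-1 : ℝ) 1)

noncomputable def HH (k : ℕ) (x : ℝ) : ℝ :=
  ∫ p : ℝ × ℝ, (-(p.1 * p.2)) ^ k * Real.exp (-x * (p.1 * p.2)) ∂QIM

instance : IsFiniteMeasure QIM := by
  constructor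
  rw [QIM, Measure.restrict_apply_univ]
  exact lt_of_le_of_lt
    (measure_mono (Set.prod_mono Set.Ioc_subset_Icc_self Set.Ioc_subset_Icc_self))
    ((isCompact_Icc.prod isCompact_Icc).measure_lt_top)

lemma integrableQ {g : ℝ × ℝ → ℝ} (hg : Continuous g) : Integrable g QIM := by
  have h1 : IntegrableOn g (Set.Icc (-1 : ℝ) 1 ×ˢ Set.Icc (-1 : ℝ) 1) :=
    hg.continuousOn.integrableOn_compact (isCompact_Icc.prod isCompact_Icc)
  exact h1.mono_set (Set.prod_mono Set.Ioc_subset_Icc_self Set.Ioc_subset_Icc_self)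

lemma QIM_eq : QIM
    = (volume.restrict (Set.Ioc (-1 : ℝ) 1)).prod (volume.restrict (Set.Ioc (-1 : ℝ) 1)) := by
  rw [QIM, Measure.prod_restrict, ← Measure.volume_eq_prod]

lemma contH (k : ℕ) (x : ℝ) :
    Continuous fun p : ℝ × ℝ => (-(p.1 * p.2)) ^ k * Real.exp (-x * (p.1 * p.2)) := by
  fun_prop

lemma hasDerivAt_HH (k : ℕ) (x₀ : ℝ) : HasDerivAt (HH k) (HH (k + 1) x₀) x₀ := by
  have key := hasDerivAt_integral_of_dominated_loc_of_deriv_le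
    (F := fun (x : ℝ) (p : ℝ × ℝ) => (-(p.1 * p.2)) ^ k * Real.exp (-x * (p.1 * p.2)))
    (F' := fun (x : ℝ) (p : ℝ × ℝ) => (-(p.1 * p.2)) ^ (k + 1) * Real.exp (-x * (p.1 * p.2)))
    (μ := QIM) (x₀ := x₀) (bound := fun _ => Real.exp (|x₀| + 1))
    (Metric.ball_mem_nhds x₀ one_pos)
    (Filter.Eventually.of_forall fun x => (contH k x).aestronglyMeasurable)
    (integrableQ (contH k x₀))
    ((contH (k + 1) x₀).aestronglyMeasurable)
    ?_ (integrable_const _) ?_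
  · exact key.2
  · refine (ae_restrict_mem (by measurability)).mono fun p hp => ?_
    intro x hx
    obtain ⟨hp1, hp2⟩ := hp
    have h1 : |p.1| ≤ 1 := abs_le.2 ⟨hp1.1.le, hp1.2⟩
    have h2 : |p.2| ≤ 1 := abs_le.2 ⟨hp2.1.le, hp2.2⟩
    have hc : |p.1 * p.2| ≤ 1 := by
      rw [abs_mul]
      calc |p.1| * |p.2| ≤ 1 * 1 := mul_le_mul h1 h2 (abs_nonneg _) zero_le_one
        _ = 1 := by norm_num
    have hx' : |x - x₀| < 1 := by simpa [Real.dist_eq] using Metric.mem_ball.1 hx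
    have hxb : |x| ≤ |x₀| + 1 := by
      have := abs_sub_abs_le_abs_sub x x₀
      linarith
    rw [norm_mul, Real.norm_eq_abs, Real.norm_eq_abs, abs_pow, abs_neg]
    have he : Real.exp (-x * (p.1 * p.2)) ≤ Real.exp (|x₀| + 1) := by
      apply Real.exp_le_exp.2
      calc -x * (p.1 * p.2) ≤ |(-x) * (p.1 * p.2)| := le_abs_self _
        _ = |x| * |p.1 * p.2| := by rw [abs_mul, abs_neg]
        _ ≤ (|x₀| + 1) * 1 := mul_le_mul hxb hc (abs_nonneg _) (by positivity)
        _ = |x₀| + 1 := by ring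
    have hpow : |p.1 * p.2| ^ (k + 1) ≤ 1 := pow_le_one₀ (abs_nonneg _) hc
    rw [Real.abs_exp]
    calc |p.1 * p.2| ^ (k + 1) * Real.exp (-x * (p.1 * p.2))
        ≤ 1 * Real.exp (|x₀| + 1) :=
          mul_le_mul hpow he (Real.exp_pos _).le zero_le_one
      _ = Real.exp (|x₀| + 1) := by ring
  · refine Filter.Eventually.of_forall fun p => ?_
    intro x _
    have h1 : HasDerivAt (fun x : ℝ => -x * (p.1 * p.2)) (-(p.1 * p.2)) x := by
      have h0 : HasDerivAt (fun x : ℝ => (-(p.1 * p.2)) * x) (-(p.1 * p.2)) x := by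
        simpa using (hasDerivAt_id x).const_mul (-(p.1 * p.2))
      have heq : (fun x : ℝ => -x * (p.1 * p.2)) = fun x : ℝ => (-(p.1 * p.2)) * x := by
        funext y; ring
      rw [heq]; exact h0
    have h2 := (h1.exp).const_mul ((-(p.1 * p.2)) ^ k)
    refine h2.congr_deriv (Eq.symm ?_)
    show (-(p.1 * p.2)) ^ (k + 1) * Real.exp (-x * (p.1 * p.2)) = _
    rw [pow_succ]; ring

lemma double_eq (x : ℝ) :
    (∫ u in (-1 : ℝ)..1, ∫ v in (-1 : ℝ)..1, Real.exp (-x * (u * v))) = HH 0 x := by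
  have hint : Integrable (fun p : ℝ × ℝ => Real.exp (-x * (p.1 * p.2))) QIM :=
    integrableQ (by fun_prop)
  have h1 : HH 0 x = ∫ p : ℝ × ℝ, Real.exp (-x * (p.1 * p.2)) ∂QIM := by
    unfold HH; simp
  rw [h1, QIM_eq]
  rw [MeasureTheory.integral_prod _ (QIM_eq ▸ hint)]
  rw [intervalIntegral.integral_of_le (by norm_num : (-1:ℝ) ≤ 1)]
  apply setIntegral_congr_fun measurableSet_Ioc
  intro u _
  beta_reduce
  rw [intervalIntegral.integral_of_le (by norm_num : (-1:ℝ) ≤ 1)]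

lemma f_factor (x : ℝ) :
    (∫ w₁ in (-1 : ℝ)..1, ∫ w₂ in (-1 : ℝ)..1, ∫ w₃ in (-1 : ℝ)..1, ∫ w₄ in (-1 : ℝ)..1,
        Real.exp (-x * (w₁ * w₂ + w₃ * w₄))) = HH 0 x * HH 0 x := by
  set D : ℝ := ∫ u in (-1 : ℝ)..1, ∫ v in (-1 : ℝ)..1, Real.exp (-x * (u * v)) with hD
  have h3 : ∀ w1 w2 : ℝ,
      (∫ w3 in (-1:ℝ)..1, ∫ w4 in (-1:ℝ)..1, Real.exp (-x * (w1 * w2 + w3 * w4)))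
        = Real.exp (-x * (w1 * w2)) * D := by
    intro w1 w2
    rw [hD, ← intervalIntegral.integral_const_mul]
    apply intervalIntegral.integral_congr
    intro w3 _
    beta_reduce
    rw [← intervalIntegral.integral_const_mul]
    apply intervalIntegral.integral_congr
    intro w4 _
    beta_reduce
    rw [← Real.exp_add]
    congr 1; ring
  have h4 : (∫ w₁ in (-1 : ℝ)..1, ∫ w₂ in (-1 : ℝ)..1, ∫ w₃ in (-1 : ℝ)..1,
      ∫ w₄ in (-1 : ℝ)..1, Real.exp (-x * (w₁ * w₂ + w₃ * w₄))) = D * D := by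
    calc (∫ w₁ in (-1 : ℝ)..1, ∫ w₂ in (-1 : ℝ)..1, ∫ w₃ in (-1 : ℝ)..1,
        ∫ w₄ in (-1 : ℝ)..1, Real.exp (-x * (w₁ * w₂ + w₃ * w₄)))
        = ∫ w₁ in (-1 : ℝ)..1, (∫ w₂ in (-1 : ℝ)..1, Real.exp (-x * (w₁ * w₂))) * D := by
          apply intervalIntegral.integral_congr
          intro w1 _
          beta_reduce
          rw [← intervalIntegral.integral_mul_const]
          apply intervalIntegral.integral_congr
          intro w2 _
          beta_reduce
          exact h3 w1 w2
      _ = D * D := by rw [intervalIntegral.integral_mul_const, ← hD]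
  rw [double_eq x] at hD
  rw [h4, hD]

/-- boundary-vanishing certificate -/
noncomputable def A0 (x u v : ℝ) : ℝ := (u ^ 2 - 1) * (x * u * (1 + v ^ 2) / 2 - v)

/-- `∂ᵤ (A0 · exp(-xuv))` -/
noncomputable def DU (x u v : ℝ) : ℝ :=
  (2 * u * (x * u * (1 + v ^ 2) / 2 - v) + (u ^ 2 - 1) * (x * (1 + v ^ 2) / 2)
    - x * v * ((u ^ 2 - 1) * (x * u * (1 + v ^ 2) / 2 - v))) * Real.exp (-x * (u * v))

lemma contDU (x : ℝ) : Continuous fun p : ℝ × ℝ => DU x p.1 p.2 := by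
  unfold DU; fun_prop

lemma contDU' (x : ℝ) : Continuous fun p : ℝ × ℝ => DU x p.2 p.1 := by
  unfold DU; fun_prop

lemma hasDerivAt_A0exp (x v u : ℝ) :
    HasDerivAt (fun u => A0 x u v * Real.exp (-x * (u * v))) (DU x u v) u := by
  have h1 : HasDerivAt (fun u : ℝ => u ^ 2 - 1) (2 * u) u := by
    simpa using (hasDerivAt_pow 2 u).sub_const 1
  have h2 : HasDerivAt (fun u : ℝ => x * u * (1 + v ^ 2) / 2 - v) (x * (1 + v ^ 2) / 2) u := by
    have h0 : HasDerivAt (fun u : ℝ => (x * (1 + v ^ 2) / 2) * u) (x * (1 + v ^ 2) / 2) u := by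
      simpa using (hasDerivAt_id u).const_mul (x * (1 + v ^ 2) / 2)
    have heq : (fun u : ℝ => x * u * (1 + v ^ 2) / 2 - v)
        = fun u : ℝ => (x * (1 + v ^ 2) / 2) * u - v := by funext y; ring
    rw [heq]; exact h0.sub_const v
  have hA : HasDerivAt (fun u => A0 x u v)
      (2 * u * (x * u * (1 + v ^ 2) / 2 - v) + (u ^ 2 - 1) * (x * (1 + v ^ 2) / 2)) u := by
    unfold A0; exact h1.mul h2
  have he : HasDerivAt (fun u : ℝ => Real.exp (-x * (u * v)))
      (Real.exp (-x * (u * v)) * (-(x * v))) u := by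
    have h0 : HasDerivAt (fun u : ℝ => (-(x * v)) * u) (-(x * v)) u := by
      simpa using (hasDerivAt_id u).const_mul (-(x * v))
    have heq : (fun u : ℝ => Real.exp (-x * (u * v)))
        = fun u : ℝ => Real.exp ((-(x * v)) * u) := by
      funext y; rw [show -x * (y * v) = -(x * v) * y from by ring]
    have hval : -x * (u * v) = -(x * v) * u := by ring
    rw [heq, hval]
    exact h0.exp
  have := hA.mul he
  refine this.congr_deriv ?_
  unfold DU A0
  ring

lemma inner_u_zero (x v : ℝ) : (∫ u in (-1 : ℝ)..1, DU x u v) = 0 := by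
  have hcont : Continuous fun u => DU x u v := by unfold DU; fun_prop
  rw [intervalIntegral.integral_eq_sub_of_hasDerivAt
    (fun u _ => hasDerivAt_A0exp x v u) (hcont.intervalIntegrable _ _)]
  unfold A0
  norm_num

lemma intU_zero (x : ℝ) : (∫ p : ℝ × ℝ, DU x p.1 p.2 ∂QIM) = 0 := by
  have hint : Integrable (fun p : ℝ × ℝ => DU x p.1 p.2) QIM := integrableQ (contDU x)
  rw [QIM_eq] at hint ⊢
  rw [MeasureTheory.integral_prod_symm _ hint]
  have : ∀ v : ℝ, (∫ u in Set.Ioc (-1 : ℝ) 1, DU x u v) = 0 := by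
    intro v
    rw [← intervalIntegral.integral_of_le (by norm_num : (-1:ℝ) ≤ 1)]
    exact inner_u_zero x v
  simp [this]

lemma intV_zero (x : ℝ) : (∫ p : ℝ × ℝ, DU x p.2 p.1 ∂QIM) = 0 := by
  have hint : Integrable (fun p : ℝ × ℝ => DU x p.2 p.1) QIM := integrableQ (contDU' x)
  rw [QIM_eq] at hint ⊢
  rw [MeasureTheory.integral_prod _ hint]
  have : ∀ u : ℝ, (∫ v in Set.Ioc (-1 : ℝ) 1, DU x v u) = 0 := by
    intro u
    rw [← intervalIntegral.integral_of_le (by norm_num : (-1:ℝ) ≤ 1)]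
    exact inner_u_zero x u
  simp [this]

lemma E0 (x : ℝ) :
    x ^ 2 * HH 3 x + 5 * x * HH 2 x + (4 - x ^ 2) * HH 1 x - x * HH 0 x = 0 := by
  have comb : x ^ 2 * HH 3 x + 5 * x * HH 2 x + (4 - x ^ 2) * HH 1 x - x * HH 0 x
      = ∫ p : ℝ × ℝ, (x ^ 2 * ((-(p.1 * p.2)) ^ 3 * Real.exp (-x * (p.1 * p.2)))
          + 5 * x * ((-(p.1 * p.2)) ^ 2 * Real.exp (-x * (p.1 * p.2)))
          + (4 - x ^ 2) * ((-(p.1 * p.2)) ^ 1 * Real.exp (-x * (p.1 * p.2)))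
          - x * ((-(p.1 * p.2)) ^ 0 * Real.exp (-x * (p.1 * p.2)))) ∂QIM := by
    rw [integral_sub (integrableQ (by fun_prop)) (integrableQ (by fun_prop)),
      integral_add (integrableQ (by fun_prop)) (integrableQ (by fun_prop)),
      integral_add (integrableQ (by fun_prop)) (integrableQ (by fun_prop)),
      MeasureTheory.integral_const_mul, MeasureTheory.integral_const_mul,
      MeasureTheory.integral_const_mul, MeasureTheory.integral_const_mul]
    rfl
  have key : (fun p : ℝ × ℝ => (x ^ 2 * ((-(p.1 * p.2)) ^ 3 * Real.exp (-x * (p.1 * p.2)))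
          + 5 * x * ((-(p.1 * p.2)) ^ 2 * Real.exp (-x * (p.1 * p.2)))
          + (4 - x ^ 2) * ((-(p.1 * p.2)) ^ 1 * Real.exp (-x * (p.1 * p.2)))
          - x * ((-(p.1 * p.2)) ^ 0 * Real.exp (-x * (p.1 * p.2)))))
      = fun p : ℝ × ℝ => DU x p.1 p.2 + DU x p.2 p.1 := by
    funext p
    unfold DU
    rw [show -x * (p.2 * p.1) = -x * (p.1 * p.2) by ring]
    ring
  rw [comb, key, integral_add (integrableQ (contDU x)) (integrableQ (contDU' x)),
    intU_zero, intV_zero]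
  norm_num

/-- The quadruple integral `f(x) = ∫∫∫∫ exp(-x(w₁w₂ + w₃w₄))` over `[-1,1]⁴` is six times
differentiable on `ℝ` and satisfies the homogeneous sixth-order linear differential equation
produced by cmAZDirectIntegrate. -/
theorem quadruple_integral_sixth_order_ODE
    (f : ℝ → ℝ)
    (hf : ∀ x : ℝ, f x =
      ∫ w₁ in (-1 : ℝ)..1, ∫ w₂ in (-1 : ℝ)..1, ∫ w₃ in (-1 : ℝ)..1, ∫ w₄ in (-1 : ℝ)..1,
        Real.exp (-x * (w₁ * w₂ + w₃ * w₄))) :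
    (∀ i : ℕ, i < 6 → Differentiable ℝ (deriv^[i] f)) ∧
    ∀ x : ℝ,
      0 = 32 * (4 * x - 16 * x ^ 3 + 9 * x ^ 5) * f x
        - 4 * (27 - 148 * x ^ 2 + 598 * x ^ 4 - 63 * x ^ 6) * deriv f x
        - 4 * (117 * x - 568 * x ^ 3 + 556 * x ^ 5 - 9 * x ^ 7) * deriv^[2] f x
        - (478 * x ^ 2 - 2919 * x ^ 4 + 603 * x ^ 6) * deriv^[3] f x
        - 5 * (34 * x ^ 3 - 247 * x ^ 5 + 9 * x ^ 7) * deriv^[4] f x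
        - (23 * x ^ 4 - 189 * x ^ 6) * deriv^[5] f x
        - (x ^ 5 - 9 * x ^ 7) * deriv^[6] f x := by
  have hH := hasDerivAt_HH
  have hfH : f = fun x => HH 0 x * HH 0 x := funext fun x => (hf x).trans (f_factor x)
  -- derivative chain for the square
  have hg0 : ∀ y : ℝ, HasDerivAt (fun x => HH 0 x * HH 0 x)
      (2 * HH 0 y * HH 1 y) y := by
    intro y
    have h := (hH 0 y).mul (hH 0 y)
    exact h.congr_deriv (by ring)
  have hg1 : ∀ y : ℝ, HasDerivAt (fun x => 2 * HH 0 x * HH 1 x)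
      (2 * HH 1 y * HH 1 y + 2 * HH 0 y * HH 2 y) y := by
    intro y
    have h := (((hH 0 y).const_mul (2:ℝ)).mul (hH 1 y))
    exact h.congr_deriv (by ring)
  have hg2 : ∀ y : ℝ, HasDerivAt (fun x => 2 * HH 1 x * HH 1 x + 2 * HH 0 x * HH 2 x)
      (6 * HH 1 y * HH 2 y + 2 * HH 0 y * HH 3 y) y := by
    intro y
    have h := ((((hH 1 y).const_mul (2:ℝ)).mul (hH 1 y)).add
      (((hH 0 y).const_mul (2:ℝ)).mul (hH 2 y)))
    exact h.congr_deriv (by ring)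
  have hg3 : ∀ y : ℝ, HasDerivAt (fun x => 6 * HH 1 x * HH 2 x + 2 * HH 0 x * HH 3 x)
      (6 * HH 2 y * HH 2 y + 8 * HH 1 y * HH 3 y + 2 * HH 0 y * HH 4 y) y := by
    intro y
    have h := ((((hH 1 y).const_mul (6:ℝ)).mul (hH 2 y)).add
      (((hH 0 y).const_mul (2:ℝ)).mul (hH 3 y)))
    exact h.congr_deriv (by ring)
  have hg4 : ∀ y : ℝ, HasDerivAt
      (fun x => 6 * HH 2 x * HH 2 x + 8 * HH 1 x * HH 3 x + 2 * HH 0 x * HH 4 x)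
      (20 * HH 2 y * HH 3 y + 10 * HH 1 y * HH 4 y + 2 * HH 0 y * HH 5 y) y := by
    intro y
    have h := (((((hH 2 y).const_mul (6:ℝ)).mul (hH 2 y)).add
      (((hH 1 y).const_mul (8:ℝ)).mul (hH 3 y))).add
      (((hH 0 y).const_mul (2:ℝ)).mul (hH 4 y)))
    exact h.congr_deriv (by ring)
  have hg5 : ∀ y : ℝ, HasDerivAt
      (fun x => 20 * HH 2 x * HH 3 x + 10 * HH 1 x * HH 4 x + 2 * HH 0 x * HH 5 x)
      (20 * HH 3 y * HH 3 y + 30 * HH 2 y * HH 4 y + 12 * HH 1 y * HH 5 y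
        + 2 * HH 0 y * HH 6 y) y := by
    intro y
    have h := (((((hH 2 y).const_mul (20:ℝ)).mul (hH 3 y)).add
      (((hH 1 y).const_mul (10:ℝ)).mul (hH 4 y))).add
      (((hH 0 y).const_mul (2:ℝ)).mul (hH 5 y)))
    exact h.congr_deriv (by ring)
  -- identify iterated derivatives
  have hd1 : deriv f = fun y => 2 * HH 0 y * HH 1 y := by
    rw [hfH]; funext y; exact (hg0 y).deriv
  have hd2 : deriv^[2] f = fun y => 2 * HH 1 y * HH 1 y + 2 * HH 0 y * HH 2 y := by
    rw [show deriv^[2] f = deriv (deriv f) from by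
      rw [Function.iterate_succ_apply', Function.iterate_one], hd1]
    funext y; exact (hg1 y).deriv
  have hd3 : deriv^[3] f = fun y => 6 * HH 1 y * HH 2 y + 2 * HH 0 y * HH 3 y := by
    rw [show deriv^[3] f = deriv (deriv^[2] f) from Function.iterate_succ_apply' deriv 2 f, hd2]
    funext y; exact (hg2 y).deriv
  have hd4 : deriv^[4] f
      = fun y => 6 * HH 2 y * HH 2 y + 8 * HH 1 y * HH 3 y + 2 * HH 0 y * HH 4 y := by
    rw [show deriv^[4] f = deriv (deriv^[3] f) from Function.iterate_succ_apply' deriv 3 f, hd3]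
    funext y; exact (hg3 y).deriv
  have hd5 : deriv^[5] f
      = fun y => 20 * HH 2 y * HH 3 y + 10 * HH 1 y * HH 4 y + 2 * HH 0 y * HH 5 y := by
    rw [show deriv^[5] f = deriv (deriv^[4] f) from Function.iterate_succ_apply' deriv 4 f, hd4]
    funext y; exact (hg4 y).deriv
  have hd6 : deriv^[6] f
      = fun y => 20 * HH 3 y * HH 3 y + 30 * HH 2 y * HH 4 y + 12 * HH 1 y * HH 5 y
        + 2 * HH 0 y * HH 6 y := by
    rw [show deriv^[6] f = deriv (deriv^[5] f) from Function.iterate_succ_apply' deriv 5 f, hd5]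
    funext y; exact (hg5 y).deriv
  -- derived ODE relations
  have hE0fun : ∀ y : ℝ, HasDerivAt
      (fun x => x ^ 2 * HH 3 x + 5 * x * HH 2 x + (4 - x ^ 2) * HH 1 x - x * HH 0 x)
      (y ^ 2 * HH 4 y + 7 * y * HH 3 y + (9 - y ^ 2) * HH 2 y - 3 * y * HH 1 y - HH 0 y) y := by
    intro y
    have h := ((((hasDerivAt_pow 2 y).mul (hH 3 y)).add
        (((hasDerivAt_id' y).const_mul (5:ℝ)).mul (hH 2 y))).add
        (((hasDerivAt_const y (4:ℝ)).sub (hasDerivAt_pow 2 y)).mul (hH 1 y))).sub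
        ((hasDerivAt_id' y).mul (hH 0 y))
    refine h.congr_deriv ?_
    push_cast [Pi.sub_apply]
    ring
  have hE1 : ∀ x : ℝ, x ^ 2 * HH 4 x + 7 * x * HH 3 x + (9 - x ^ 2) * HH 2 x
      - 3 * x * HH 1 x - HH 0 x = 0 := by
    intro x
    have heq : (fun x : ℝ => x ^ 2 * HH 3 x + 5 * x * HH 2 x + (4 - x ^ 2) * HH 1 x
        - x * HH 0 x) = fun _ => (0:ℝ) := funext E0
    have h := hE0fun x
    rw [heq] at h
    exact ((hasDerivAt_const x (0:ℝ)).unique h).symm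
  have hE1fun : ∀ y : ℝ, HasDerivAt
      (fun x => x ^ 2 * HH 4 x + 7 * x * HH 3 x + (9 - x ^ 2) * HH 2 x - 3 * x * HH 1 x
        - HH 0 x)
      (y ^ 2 * HH 5 y + 9 * y * HH 4 y + (16 - y ^ 2) * HH 3 y - 5 * y * HH 2 y
        - 4 * HH 1 y) y := by
    intro y
    have h := (((((hasDerivAt_pow 2 y).mul (hH 4 y)).add
        (((hasDerivAt_id' y).const_mul (7:ℝ)).mul (hH 3 y))).add
        (((hasDerivAt_const y (9:ℝ)).sub (hasDerivAt_pow 2 y)).mul (hH 2 y))).sub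
        (((hasDerivAt_id' y).const_mul (3:ℝ)).mul (hH 1 y))).sub (hH 0 y)
    refine h.congr_deriv ?_
    push_cast [Pi.sub_apply]
    ring
  have hE2 : ∀ x : ℝ, x ^ 2 * HH 5 x + 9 * x * HH 4 x + (16 - x ^ 2) * HH 3 x
      - 5 * x * HH 2 x - 4 * HH 1 x = 0 := by
    intro x
    have heq : (fun x : ℝ => x ^ 2 * HH 4 x + 7 * x * HH 3 x + (9 - x ^ 2) * HH 2 x
        - 3 * x * HH 1 x - HH 0 x) = fun _ => (0:ℝ) := funext hE1
    have h := hE1fun x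
    rw [heq] at h
    exact ((hasDerivAt_const x (0:ℝ)).unique h).symm
  have hE2fun : ∀ y : ℝ, HasDerivAt
      (fun x => x ^ 2 * HH 5 x + 9 * x * HH 4 x + (16 - x ^ 2) * HH 3 x - 5 * x * HH 2 x
        - 4 * HH 1 x)
      (y ^ 2 * HH 6 y + 11 * y * HH 5 y + (25 - y ^ 2) * HH 4 y - 7 * y * HH 3 y
        - 9 * HH 2 y) y := by
    intro y
    have h := (((((hasDerivAt_pow 2 y).mul (hH 5 y)).add
        (((hasDerivAt_id' y).const_mul (9:ℝ)).mul (hH 4 y))).add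
        (((hasDerivAt_const y (16:ℝ)).sub (hasDerivAt_pow 2 y)).mul (hH 3 y))).sub
        (((hasDerivAt_id' y).const_mul (5:ℝ)).mul (hH 2 y))).sub ((hH 1 y).const_mul (4:ℝ))
    refine h.congr_deriv ?_
    push_cast [Pi.sub_apply]
    ring
  have hE3 : ∀ x : ℝ, x ^ 2 * HH 6 x + 11 * x * HH 5 x + (25 - x ^ 2) * HH 4 x
      - 7 * x * HH 3 x - 9 * HH 2 x = 0 := by
    intro x
    have heq : (fun x : ℝ => x ^ 2 * HH 5 x + 9 * x * HH 4 x + (16 - x ^ 2) * HH 3 x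
        - 5 * x * HH 2 x - 4 * HH 1 x) = fun _ => (0:ℝ) := funext hE2
    have h := hE2fun x
    rw [heq] at h
    exact ((hasDerivAt_const x (0:ℝ)).unique h).symm
  constructor
  · intro i hi
    interval_cases i
    · rw [Function.iterate_zero, id_eq, hfH]
      exact fun y => (hg0 y).differentiableAt
    · rw [Function.iterate_one, hd1]
      exact fun y => (hg1 y).differentiableAt
    · rw [hd2]; exact fun y => (hg2 y).differentiableAt
    · rw [hd3]; exact fun y => (hg3 y).differentiableAt
    · rw [hd4]; exact fun y => (hg4 y).differentiableAt
    · rw [hd5]; exact fun y => (hg5 y).differentiableAt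
  · intro x
    rw [hd6, hd5, hd4, hd3, hd2, hd1, hfH]
    beta_reduce
    linear_combination
      (-(-54 * HH 0 x - 234 * x * HH 1 x + 114 * x^2 * HH 0 x - 150 * x^2 * HH 2 x
          - 20 * x^3 * HH 3 x + 974 * x^3 * HH 1 x + 990 * x^4 * HH 2 x - 216 * x^4 * HH 0 x
          + 180 * x^5 * HH 3 x - 72 * x^5 * HH 1 x)) * E0 x
      + (-(-74 * x * HH 0 x - 122 * x^2 * HH 1 x + 398 * x^3 * HH 0 x - 30 * x^3 * HH 2 x
          + 918 * x^4 * HH 1 x + 270 * x^5 * HH 2 x - 72 * x^5 * HH 0 x)) * hE1 x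
      + (-(-24 * x^2 * HH 0 x - 12 * x^3 * HH 1 x + 180 * x^4 * HH 0 x
          + 108 * x^5 * HH 1 x)) * hE2 x
      + (-(-2 * x^3 * HH 0 x + 18 * x^5 * HH 0 x)) * hE3 x
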